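/- In the CSP setting, suppose that: each constraint shares a variable with at most Δ other constraints; each variable appears in at most Δ constraints; ℙ[C] ≤ p″·q for every C ∈ 𝒞, where p″ ∈ (0,1) satisfies 3·p″·q·Δ ≤ 1/2. Let μ_S denote the uniform distribution on satisfying assignments (which is well-defined by the Lovász Local Lemma under these hypotheses). Then for every variable v ∈ V, the total variation distance between the marginal distribution of v under μ_S and the uniform distribution on [q] satisfies TV( μ_S[v = ·], ℙ[v = ·] ) ≤ (1 − 3p″q)^{−Δ} − 1. -/

import Mathlib

open Finset
open scoped Classical

lemma indep_count {n q : ℕ} (hq : 0 < q) (T : Finset (Fin n))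
    (E F : (Fin n → Fin q) → Prop)
    (hE : ∀ σ τ : Fin n → Fin q, (∀ w ∈ T, σ w = τ w) → (E σ ↔ E τ))
    (hF : ∀ σ τ : Fin n → Fin q, (∀ w, w ∉ T → σ w = τ w) → (F σ ↔ F τ)) :
    (Finset.univ.filter fun σ => E σ ∧ F σ).card * q ^ n
      = (Finset.univ.filter E).card * (Finset.univ.filter F).card := by
  classical
  have : Inhabited (Fin q) := ⟨⟨0, hq⟩⟩
  set e := Equiv.piEquivPiSubtypeProd (fun i : Fin n => i ∈ T) (fun _ => Fin q) with he
  set E' : ({i : Fin n // i ∈ T} → Fin q) → Prop := fun f => E (e.symm (f, fun _ => default)) with hE'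
  set F' : ({i : Fin n // i ∉ T} → Fin q) → Prop := fun g => F (e.symm (fun _ => default, g)) with hF'
  have keyE : ∀ σ : Fin n → Fin q, E σ ↔ E' (fun i => σ i.1) := by
    intro σ
    apply hE
    intro w hw
    simp [he, Equiv.piEquivPiSubtypeProd, hw]
  have keyF : ∀ σ : Fin n → Fin q, F σ ↔ F' (fun i => σ i.1) := by
    intro σ
    apply hF
    intro w hw
    simp [he, Equiv.piEquivPiSubtypeProd, hw]
  have c1 : (Finset.univ.filter fun σ => E σ ∧ F σ).card
      = Fintype.card {f // E' f} * Fintype.card {g // F' g} := by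
    rw [← Fintype.card_subtype, ← Fintype.card_prod]
    apply Fintype.card_congr
    exact ((Equiv.subtypeEquiv e (by
      intro σ
      rw [keyE σ, keyF σ]
      simp [he, Equiv.piEquivPiSubtypeProd])).trans
      (Equiv.subtypeProdEquivProd))
  have cE : (Finset.univ.filter E).card
      = Fintype.card {f // E' f} * q ^ (Fintype.card {i : Fin n // i ∉ T}) := by
    rw [← Fintype.card_subtype]
    have : Fintype.card {g : {i : Fin n // i ∉ T} → Fin q // True} *
        0 = 0 := by simp
    have e2 : {σ : Fin n → Fin q // E σ} ≃ {f // E' f} × ({i : Fin n // i ∉ T} → Fin q) := by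
      refine ((Equiv.subtypeEquiv e (by
        intro σ
        rw [keyE σ]
        constructor
        · intro h; exact ⟨h, trivial⟩
        · intro h
          convert h.1 using 2 <;> rfl)).trans
        Equiv.subtypeProdEquivProd).trans
        (Equiv.prodCongr (Equiv.refl _) (Equiv.subtypeUnivEquiv fun _ => trivial))
    rw [Fintype.card_congr e2, Fintype.card_prod, Fintype.card_fun, Fintype.card_fin]
  have cF : (Finset.univ.filter F).card
      = q ^ (Fintype.card {i : Fin n // i ∈ T}) * Fintype.card {g // F' g} := by
    rw [← Fintype.card_subtype]
    have e2 : {σ : Fin n → Fin q // F σ} ≃ ({i : Fin n // i ∈ T} → Fin q) × {g // F' g} := by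
      refine ((Equiv.subtypeEquiv e (by
        intro σ
        rw [keyF σ]
        constructor
        · intro h; exact ⟨trivial, h⟩
        · intro h
          convert h.2 using 2 <;> rfl)).trans
        Equiv.subtypeProdEquivProd).trans
        (Equiv.prodCongr (Equiv.subtypeUnivEquiv fun _ => trivial) (Equiv.refl _))
    rw [Fintype.card_congr e2, Fintype.card_prod, Fintype.card_fun, Fintype.card_fin]
  have hcards : Fintype.card {i : Fin n // i ∈ T} + Fintype.card {i : Fin n // i ∉ T} = n := by
    have h1 : Fintype.card {i : Fin n // i ∉ T} = n - Fintype.card {i : Fin n // i ∈ T} := by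
      rw [Fintype.card_subtype_compl, Fintype.card_fin]
    have h2 : Fintype.card {i : Fin n // i ∈ T} ≤ n := by
      have := Fintype.card_subtype_le (fun i : Fin n => i ∈ T)
      simpa using this
    omega
  have hpow : q ^ n = q ^ (Fintype.card {i : Fin n // i ∈ T}) * q ^ (Fintype.card {i : Fin n // i ∉ T}) := by
    rw [← pow_add, hcards]
  rw [c1, cE, cF, hpow]
  ring

noncomputable def Nsat {n q m : ℕ} (viol : Fin m → (Fin n → Fin q) → Prop)
    (S : Finset (Fin m)) : ℕ :=
  (Finset.univ.filter fun σ : Fin n → Fin q => ∀ j ∈ S, ¬ viol j σ).card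

noncomputable def Nvio {n q m : ℕ} (viol : Fin m → (Fin n → Fin q) → Prop)
    (i : Fin m) (S : Finset (Fin m)) : ℕ :=
  (Finset.univ.filter fun σ : Fin n → Fin q => viol i σ ∧ ∀ j ∈ S, ¬ viol j σ).card

lemma Nsat_split {n q m : ℕ} (viol : Fin m → (Fin n → Fin q) → Prop)
    (i : Fin m) (S : Finset (Fin m)) :
    Nsat viol S = Nsat viol (insert i S) + Nvio viol i S := by
  classical
  unfold Nsat Nvio
  rw [← Finset.card_filter_add_card_filter_not
    (s := Finset.univ.filter fun σ : Fin n → Fin q => ∀ j ∈ S, ¬ viol j σ)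
    (p := fun σ => ¬ viol i σ)]
  · congr 1
    · rw [Finset.filter_filter]
      apply congrArg Finset.card
      apply Finset.filter_congr
      intro σ _
      simp only [Finset.mem_insert]
      constructor
      · rintro ⟨h1, h2⟩ j (rfl | hj)
        · exact h2
        · exact h1 j hj
      · intro h
        exact ⟨fun j hj => h j (Or.inr hj), h i (Or.inl rfl)⟩
    · rw [Finset.filter_filter]
      apply congrArg Finset.card
      apply Finset.filter_congr
      intro σ _
      simp only [not_not]
      tauto

lemma Nsat_mono {n q m : ℕ} (viol : Fin m → (Fin n → Fin q) → Prop)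
    {S S' : Finset (Fin m)} (h : S ⊆ S') : Nsat viol S' ≤ Nsat viol S := by
  classical
  apply Finset.card_le_card
  intro σ hσ
  simp only [Finset.mem_filter] at *
  exact ⟨hσ.1, fun j hj => hσ.2 j (h hj)⟩

lemma Nvio_mono {n q m : ℕ} (viol : Fin m → (Fin n → Fin q) → Prop) (i : Fin m)
    {S S' : Finset (Fin m)} (h : S ⊆ S') : Nvio viol i S' ≤ Nvio viol i S := by
  classical
  apply Finset.card_le_card
  intro σ hσ
  simp only [Finset.mem_filter] at *
  exact ⟨hσ.1, hσ.2.1, fun j hj => hσ.2.2 j (h hj)⟩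

lemma Nsat_empty {n q m : ℕ} (viol : Fin m → (Fin n → Fin q) → Prop) :
    Nsat viol (∅ : Finset (Fin m)) = q ^ n := by
  classical
  unfold Nsat
  rw [Finset.filter_true_of_mem (fun σ _ => by simp), Finset.card_univ]
  simp

lemma peel {n q m : ℕ} (viol : Fin m → (Fin n → Fin q) → Prop) (x : ℝ) (hx : x ≤ 1)
    (A : Finset (Fin m)) :
    ∀ B : Finset (Fin m),
      (∀ B' ⊆ B, ∀ j ∈ B, j ∉ A ∪ B' →
        (Nvio viol j (A ∪ B') : ℝ) ≤ x * Nsat viol (A ∪ B')) →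
      (∀ j ∈ B, j ∉ A) →
      (1 - x) ^ B.card * (Nsat viol A : ℝ) ≤ Nsat viol (A ∪ B) := by
  classical
  intro B
  induction B using Finset.induction_on with
  | empty => intro _ _; simp
  | @insert j B₀ hj ih =>
    intro hlll hdisj
    have hjA : j ∉ A := hdisj j (Finset.mem_insert_self j B₀)
    have hjAB : j ∉ A ∪ B₀ := by
      simp only [Finset.mem_union]
      tauto
    have hrec := ih (fun B' hB' j' hj' hjn => hlll B' (hB'.trans (Finset.subset_insert j B₀))
        j' (Finset.mem_insert_of_mem hj') hjn)
      (fun j' hj' => hdisj j' (Finset.mem_insert_of_mem hj'))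
    have hstep := hlll B₀ (Finset.subset_insert j B₀) j (Finset.mem_insert_self j B₀) hjAB
    have hsplit := Nsat_split viol j (A ∪ B₀)
    have heq : A ∪ insert j B₀ = insert j (A ∪ B₀) := by
      ext k; simp [Finset.mem_union, Finset.mem_insert]
    have h1 : (Nsat viol (A ∪ insert j B₀) : ℝ)
        = (Nsat viol (A ∪ B₀) : ℝ) - Nvio viol j (A ∪ B₀) := by
      rw [heq]
      have := hsplit
      push_cast [this]
      ring
    rw [h1, Finset.card_insert_of_notMem hj, pow_succ]
    have hge : (1 - x) * (Nsat viol (A ∪ B₀) : ℝ)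
        ≤ (Nsat viol (A ∪ B₀) : ℝ) - Nvio viol j (A ∪ B₀) := by nlinarith
    calc (1 - x) ^ B₀.card * (1 - x) * (Nsat viol A : ℝ)
        = (1 - x) * ((1 - x) ^ B₀.card * (Nsat viol A : ℝ)) := by ring
      _ ≤ (1 - x) * (Nsat viol (A ∪ B₀) : ℝ) := by nlinarith
      _ ≤ _ := hge

lemma lll_step {n q m : ℕ} (hq : 0 < q)
    (vbl : Fin m → Finset (Fin n)) (viol : Fin m → (Fin n → Fin q) → Prop)
    (hdep : ∀ j (σ τ : Fin n → Fin q), (∀ v ∈ vbl j, σ v = τ v) → (viol j σ ↔ viol j τ))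
    (Δ : ℕ)
    (hdegC : ∀ i : Fin m,
      (Finset.univ.filter fun j => j ≠ i ∧ (vbl i ∩ vbl j).Nonempty).card ≤ Δ)
    (x : ℝ) (hx0 : 0 ≤ x) (hx1 : x ≤ 1)
    (hpC' : ∀ i : Fin m,
      ((Finset.univ.filter fun σ : Fin n → Fin q => viol i σ).card : ℝ)
        ≤ x * (1 - x) ^ Δ * (q : ℝ) ^ n)
    (S : Finset (Fin m))
    (IH : ∀ S' : Finset (Fin m), S'.card < S.card → ∀ i ∉ S',
      (Nvio viol i S' : ℝ) ≤ x * Nsat viol S')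
    (i : Fin m) (hi : i ∉ S) :
    (Nvio viol i S : ℝ) ≤ x * Nsat viol S := by
  classical
  set Γ : Finset (Fin m) :=
    Finset.univ.filter fun j => j ≠ i ∧ (vbl i ∩ vbl j).Nonempty with hΓ
  set S₁ := S ∩ Γ with hS₁
  set S₂ := S \ Γ with hS₂
  have hU : S₂ ∪ S₁ = S := Finset.sdiff_union_inter S Γ
  -- independence
  have hindep : (Nvio viol i S₂ : ℝ) * (q : ℝ) ^ n
      = ((Finset.univ.filter fun σ : Fin n → Fin q => viol i σ).card : ℝ)
        * (Nsat viol S₂ : ℝ) := by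
    have := indep_count hq (vbl i) (viol i)
      (fun σ => ∀ j ∈ S₂, ¬ viol j σ)
      (fun σ τ h => hdep i σ τ h)
      (by
        intro σ τ h
        have hagree : ∀ j ∈ S₂, (viol j σ ↔ viol j τ) := by
          intro j hj
          apply hdep
          intro w hw
          have hjΓ : j ∉ Γ := (Finset.mem_sdiff.mp hj).2
          have hji : j ≠ i := fun e => hi (e ▸ (Finset.mem_sdiff.mp hj).1)
          have hnon : ¬ (vbl i ∩ vbl j).Nonempty := fun hne =>
            hjΓ (Finset.mem_filter.mpr ⟨Finset.mem_univ j, hji, hne⟩)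
          exact h w (fun hwT => hnon ⟨w, Finset.mem_inter.mpr ⟨hwT, hw⟩⟩)
        constructor <;> intro hh j hj
        · exact fun hv => hh j hj ((hagree j hj).mpr hv)
        · exact fun hv => hh j hj ((hagree j hj).mp hv))
    beta_reduce at this
    unfold Nvio Nsat
    have h2 : (Finset.univ.filter fun σ : Fin n → Fin q => viol i σ ∧ ∀ j ∈ S₂, ¬ viol j σ).card * q ^ n
        = (Finset.univ.filter fun σ : Fin n → Fin q => viol i σ).card
          * (Finset.univ.filter fun σ : Fin n → Fin q => ∀ j ∈ S₂, ¬ viol j σ).card := by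
      convert this using 3 <;> congr!
    exact_mod_cast h2
  -- peel
  have hpeel : (1 - x) ^ S₁.card * (Nsat viol S₂ : ℝ) ≤ Nsat viol S := by
    rw [← hU]
    apply peel viol x hx1 S₂ S₁
    · intro B' hB' j hj hjn
      apply IH
      · apply Finset.card_lt_card
        constructor
        · intro k hk
          rcases Finset.mem_union.mp hk with h | h
          · exact (Finset.mem_sdiff.mp h).1
          · exact Finset.mem_of_mem_inter_left (hB' h)
        · intro hsub
          exact hjn (hsub (Finset.mem_of_mem_inter_left hj))
      · exact hjn
    · intro j hj
      simp only [hS₂, Finset.mem_sdiff]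
      intro h
      exact h.2 (Finset.mem_of_mem_inter_right hj)
  have hS₁card : S₁.card ≤ Δ :=
    le_trans (Finset.card_le_card (Finset.inter_subset_right)) (hdegC i)
  have hqn : (0:ℝ) < (q:ℝ) ^ n := by positivity
  have h1 : (Nvio viol i S : ℝ) ≤ (Nvio viol i S₂ : ℝ) := by
    exact_mod_cast Nvio_mono viol i (by rw [← hU]; exact Finset.subset_union_left)
  have h2 : (Nvio viol i S₂ : ℝ) ≤ x * (1 - x) ^ Δ * (Nsat viol S₂ : ℝ) := by
    rw [← mul_le_mul_iff_of_pos_right hqn, hindep]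
    have hNs : (0:ℝ) ≤ (Nsat viol S₂ : ℝ) := Nat.cast_nonneg _
    nlinarith [hpC' i]
  have h3 : (1 - x) ^ Δ ≤ (1 - x) ^ S₁.card :=
    pow_le_pow_of_le_one (by linarith) (by linarith) hS₁card
  have hNs : (0:ℝ) ≤ (Nsat viol S₂ : ℝ) := Nat.cast_nonneg _
  calc (Nvio viol i S : ℝ) ≤ x * (1 - x) ^ Δ * (Nsat viol S₂ : ℝ) := le_trans h1 h2
    _ ≤ x * ((1 - x) ^ S₁.card * (Nsat viol S₂ : ℝ)) := by
        rw [← mul_assoc]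
        exact mul_le_mul_of_nonneg_right (mul_le_mul_of_nonneg_left h3 hx0) hNs
    _ ≤ x * Nsat viol S := mul_le_mul_of_nonneg_left hpeel hx0

lemma lll {n q m : ℕ} (hq : 0 < q)
    (vbl : Fin m → Finset (Fin n)) (viol : Fin m → (Fin n → Fin q) → Prop)
    (hdep : ∀ j (σ τ : Fin n → Fin q), (∀ v ∈ vbl j, σ v = τ v) → (viol j σ ↔ viol j τ))
    (Δ : ℕ)
    (hdegC : ∀ i : Fin m,
      (Finset.univ.filter fun j => j ≠ i ∧ (vbl i ∩ vbl j).Nonempty).card ≤ Δ)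
    (x : ℝ) (hx0 : 0 ≤ x) (hx1 : x ≤ 1)
    (hpC' : ∀ i : Fin m,
      ((Finset.univ.filter fun σ : Fin n → Fin q => viol i σ).card : ℝ)
        ≤ x * (1 - x) ^ Δ * (q : ℝ) ^ n)
    (S : Finset (Fin m)) (i : Fin m) (hi : i ∉ S) :
    (Nvio viol i S : ℝ) ≤ x * Nsat viol S := by
  classical
  have H : ∀ k : ℕ, ∀ S : Finset (Fin m), S.card ≤ k → ∀ i ∉ S,
      (Nvio viol i S : ℝ) ≤ x * Nsat viol S := by
    intro k
    induction k with
    | zero =>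
      intro S hS i hi
      apply lll_step hq vbl viol hdep Δ hdegC x hx0 hx1 hpC' S _ i hi
      intro S' hS' i' hi'
      omega
    | succ k ih =>
      intro S hS i hi
      apply lll_step hq vbl viol hdep Δ hdegC x hx0 hx1 hpC' S _ i hi
      intro S' hS' i' hi'
      exact ih S' (by omega) i' hi'
  exact H S.card S le_rfl i hi

lemma card_fix {n q : ℕ} (v : Fin n) (a : Fin q) :
    (Finset.univ.filter fun σ : Fin n → Fin q => σ v = a).card * q = q ^ n := by
  classical
  have e : {σ : Fin n → Fin q // σ v = a} ≃ ({j : Fin n // j ≠ v} → Fin q) :=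
    { toFun := fun σ j => σ.1 j.1
      invFun := fun g => ⟨fun w => if h : w = v then a else g ⟨w, h⟩, by simp⟩
      left_inv := by
        rintro ⟨σ, hσ⟩
        ext w
        by_cases h : w = v
        · subst h; simp [hσ]
        · simp [h]
      right_inv := by
        intro g
        ext j
        simp [j.2] }
  have h1 : (Finset.univ.filter fun σ : Fin n → Fin q => σ v = a).card
      = q ^ (n - 1) := by
    rw [← Fintype.card_subtype, Fintype.card_congr e, Fintype.card_fun,
      Fintype.card_subtype_compl, Fintype.card_fin, Fintype.card_fin]
    have : Fintype.card {j : Fin n // j = v} = 1 := Fintype.card_subtype_eq v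
    rw [this]
  have hn : 0 < n := v.pos
  have h2 : n - 1 + 1 = n := Nat.succ_pred_eq_of_pos hn
  rw [h1, ← pow_succ, h2]


/-- **Marginals of the uniform distribution on satisfying assignments are near-uniform.**
In the CSP setting (variables `Fin n` with values in `Fin q`, constraints `Fin m`, where
constraint `j` depends only on the variables `vbl j` and `viol j σ` means `σ` violates
constraint `j`), suppose each constraint shares a variable with at most `Δ` other
constraints, each variable appears in at most `Δ` constraints, and `ℙ[C] ≤ p″·q` for every
constraint `C`, where `3·p″·q·Δ ≤ 1/2`. Then for every variable `v`, the total variation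
distance between the marginal at `v` of the uniform distribution `μ_S` on satisfying
assignments and the uniform distribution on `Fin q` is at most `(1 − 3p″q)^(−Δ) − 1`.
Here `μ_S[v = a]` is rendered as
`#{σ satisfying, σ v = a} / #{σ satisfying}` and the total variation distance as
`(1/2)·∑_a |μ_S[v = a] − 1/q|`. -/
theorem tv_marginal_le {n q m : ℕ} (hq : 0 < q)
    (vbl : Fin m → Finset (Fin n)) (viol : Fin m → (Fin n → Fin q) → Prop)
    (hdep : ∀ j (σ τ : Fin n → Fin q), (∀ v ∈ vbl j, σ v = τ v) → (viol j σ ↔ viol j τ))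
    (Δ : ℕ) (hΔ : 1 ≤ Δ)
    (hdegC : ∀ i : Fin m,
      (Finset.univ.filter fun j => j ≠ i ∧ (vbl i ∩ vbl j).Nonempty).card ≤ Δ)
    (hdegV : ∀ v : Fin n,
      (Finset.univ.filter fun j : Fin m => v ∈ vbl j).card ≤ Δ)
    (p'' : ℝ) (hp'' : p'' ∈ Set.Ioo (0 : ℝ) 1)
    (hpC : ∀ j : Fin m,
      ((Finset.univ.filter fun σ : Fin n → Fin q => viol j σ).card : ℝ) / (q : ℝ) ^ n
        ≤ p'' * q)
    (hsmall : 3 * p'' * q * Δ ≤ 1 / 2)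
    (v : Fin n) :
    (1 / 2) * ∑ a : Fin q,
        |((Finset.univ.filter fun σ : Fin n → Fin q =>
              (∀ j, ¬ viol j σ) ∧ σ v = a).card : ℝ) /
            ((Finset.univ.filter fun σ : Fin n → Fin q => ∀ j, ¬ viol j σ).card : ℝ)
          - 1 / q|
      ≤ ((1 - 3 * p'' * q) ^ Δ)⁻¹ - 1 := by
  classical
  set x : ℝ := 3 * p'' * q with hxdef
  -- basic numeric facts
  have hq0 : (0:ℝ) < q := by exact_mod_cast hq
  have hqn : (0:ℝ) < (q:ℝ) ^ n := by positivity
  have hx0 : 0 < x := by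
    have := hp''.1
    positivity
  have hΔ1 : (1:ℝ) ≤ (Δ:ℝ) := by exact_mod_cast hΔ
  have hxΔ : x * Δ ≤ 1/2 := hsmall
  have hxhalf : x ≤ 1/2 := by nlinarith
  have hx1 : x ≤ 1 := by linarith
  have hpowhalf : (1:ℝ)/2 ≤ (1 - x) ^ Δ := by
    have hb := one_add_mul_le_pow (a := -x) (by linarith) Δ
    have : 1 + (Δ:ℝ) * (-x) = 1 - Δ * x := by ring
    rw [this] at hb
    have : (Δ:ℝ) * x ≤ 1/2 := by linarith [hxΔ]
    calc (1:ℝ)/2 = 1 - 1/2 := by norm_num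
      _ ≤ 1 - Δ * x := by linarith
      _ ≤ (1 + -x) ^ Δ := hb
      _ = (1 - x) ^ Δ := by ring_nf
  have hpowpos : (0:ℝ) < (1 - x) ^ Δ := by linarith
  have hpowle1 : (1 - x) ^ Δ ≤ 1 :=
    pow_le_one₀ (by linarith) (by linarith)
  -- LLL hypothesis
  have hpC' : ∀ i : Fin m,
      ((Finset.univ.filter fun σ : Fin n → Fin q => viol i σ).card : ℝ)
        ≤ x * (1 - x) ^ Δ * (q : ℝ) ^ n := by
    intro i
    have h1 := hpC i
    have h2 : ((Finset.univ.filter fun σ : Fin n → Fin q => viol i σ).card : ℝ)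
        ≤ p'' * q * (q:ℝ)^n := by
      rw [div_le_iff₀ hqn] at h1
      exact h1
    have h3 : p'' * q ≤ x * (1 - x) ^ Δ := by
      have : p'' * q = x / 3 := by rw [hxdef]; ring
      rw [this]
      nlinarith
    nlinarith
  have hlll := lll hq vbl viol hdep Δ hdegC x hx0.le hx1 hpC'
  -- positivity of satisfying counts
  have hpos : ∀ S : Finset (Fin m), (0:ℝ) < Nsat viol S := by
    intro S
    have hpe := peel viol x hx1 ∅ S
      (fun B' _ j _ hjn => hlll (∅ ∪ B') j hjn) (by simp)
    rw [Finset.empty_union] at hpe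
    have : (0:ℝ) < (1 - x) ^ S.card * (Nsat viol (∅ : Finset (Fin m)) : ℝ) := by
      rw [Nsat_empty viol]
      have : (0:ℝ) < (1-x) ^ S.card := pow_pos (by linarith) _
      push_cast
      positivity
    linarith
  -- bridge: satisfying assignments
  have hSat : (Finset.univ.filter fun σ : Fin n → Fin q => ∀ j, ¬ viol j σ).card
      = Nsat viol (Finset.univ : Finset (Fin m)) := by
    unfold Nsat
    apply congrArg Finset.card
    apply Finset.filter_congr
    intro σ _
    simp
  set Satr : ℝ := ((Finset.univ.filter fun σ : Fin n → Fin q => ∀ j, ¬ viol j σ).card : ℝ)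
    with hSatr
  have hSatpos : 0 < Satr := by
    rw [hSatr, hSat]; exact hpos _
  -- the sets of constraints containing / not containing v
  set Γv : Finset (Fin m) := Finset.univ.filter fun j : Fin m => v ∈ vbl j with hΓv
  set A : Finset (Fin m) := Finset.univ.filter fun j : Fin m => v ∉ vbl j with hA
  have hAΓ : A ∪ Γv = Finset.univ := by
    ext j
    simp [hA, hΓv, Finset.mem_union]
    tauto
  have hApos : (0:ℝ) < Nsat viol A := hpos A
  -- peel bound for Satr
  have hpeelA : (1 - x) ^ Δ * (Nsat viol A : ℝ) ≤ Satr := by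
    have hpe := peel viol x hx1 A Γv
      (fun B' _ j _ hjn => hlll (A ∪ B') j hjn)
      (fun j hj => by
        simp only [hA, hΓv, Finset.mem_filter] at *
        exact fun h => h.2 hj.2)
    rw [hAΓ] at hpe
    have hmono : (1 - x) ^ Δ ≤ (1 - x) ^ Γv.card :=
      pow_le_pow_of_le_one (by linarith) (by linarith) (hdegV v)
    have hNs : (0:ℝ) ≤ (Nsat viol A : ℝ) := Nat.cast_nonneg _
    have : (1 - x) ^ Δ * (Nsat viol A : ℝ) ≤ (1 - x) ^ Γv.card * (Nsat viol A : ℝ) :=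
      mul_le_mul_of_nonneg_right hmono hNs
    rw [hSatr, hSat]
    linarith
  -- per-value marginal upper bound
  have hmarg : ∀ a : Fin q,
      ((Finset.univ.filter fun σ : Fin n → Fin q =>
          (∀ j, ¬ viol j σ) ∧ σ v = a).card : ℝ)
        ≤ (1/q) * ((1 - x) ^ Δ)⁻¹ * Satr := by
    intro a
    -- step 1: relax to constraints in A only
    have step1 : (Finset.univ.filter fun σ : Fin n → Fin q =>
          (∀ j, ¬ viol j σ) ∧ σ v = a).card
        ≤ (Finset.univ.filter fun σ : Fin n → Fin q =>
          σ v = a ∧ ∀ j ∈ A, ¬ viol j σ).card := by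
      apply Finset.card_le_card
      intro σ hσ
      simp only [Finset.mem_filter] at *
      exact ⟨hσ.1, hσ.2.2, fun j _ => hσ.2.1 j⟩
    -- step 2: independence
    have step2 : ((Finset.univ.filter fun σ : Fin n → Fin q =>
          σ v = a ∧ ∀ j ∈ A, ¬ viol j σ).card) * q ^ n
        = (Finset.univ.filter fun σ : Fin n → Fin q => σ v = a).card
          * Nsat viol A := by
      have hic := indep_count hq ({v} : Finset (Fin n))
        (fun σ => σ v = a) (fun σ => ∀ j ∈ A, ¬ viol j σ)
        (by
          intro σ τ h
          show σ v = a ↔ τ v = a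
          rw [h v (Finset.mem_singleton_self v)])
        (by
          intro σ τ h
          have hagree : ∀ j ∈ A, (viol j σ ↔ viol j τ) := by
            intro j hj
            apply hdep
            intro w hw
            have hvj : v ∉ vbl j := by
              simp only [hA, Finset.mem_filter] at hj
              exact hj.2
            have hwv : w ∉ ({v} : Finset (Fin n)) := by
              simp only [Finset.mem_singleton]
              rintro rfl
              exact hvj hw
            exact h w hwv
          constructor <;> intro hh j hj
          · exact fun hv' => hh j hj ((hagree j hj).mpr hv')
          · exact fun hv' => hh j hj ((hagree j hj).mp hv'))
      beta_reduce at hic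
      unfold Nsat
      convert hic using 3 <;> congr!
    have hEa := card_fix v a
    -- derive M = Nsat A / q in ℝ
    set M : ℕ := (Finset.univ.filter fun σ : Fin n → Fin q =>
          σ v = a ∧ ∀ j ∈ A, ¬ viol j σ).card with hM
    have hMr : (M:ℝ) * q = (Nsat viol A : ℝ) := by
      have h1 : (M:ℝ) * (q:ℝ)^n
          = ((Finset.univ.filter fun σ : Fin n → Fin q => σ v = a).card : ℝ)
            * (Nsat viol A : ℝ) := by exact_mod_cast step2
      have h2 : ((Finset.univ.filter fun σ : Fin n → Fin q => σ v = a).card : ℝ) * q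
          = (q:ℝ)^n := by exact_mod_cast hEa
      have h3 : (M:ℝ) * q * (q:ℝ)^n = (Nsat viol A : ℝ) * (q:ℝ)^n := by
        calc (M:ℝ) * q * (q:ℝ)^n = (M:ℝ) * (q:ℝ)^n * q := by ring
          _ = ((Finset.univ.filter fun σ : Fin n → Fin q => σ v = a).card : ℝ)
              * (Nsat viol A : ℝ) * q := by rw [h1]
          _ = ((Finset.univ.filter fun σ : Fin n → Fin q => σ v = a).card : ℝ) * q
              * (Nsat viol A : ℝ) := by ring
          _ = (q:ℝ)^n * (Nsat viol A : ℝ) := by rw [h2]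
          _ = (Nsat viol A : ℝ) * (q:ℝ)^n := by ring
      exact mul_right_cancel₀ (ne_of_gt hqn) h3
    have hstep1r : ((Finset.univ.filter fun σ : Fin n → Fin q =>
          (∀ j, ¬ viol j σ) ∧ σ v = a).card : ℝ) ≤ (M:ℝ) := by
      exact_mod_cast step1
    have hMle : (M:ℝ) = (Nsat viol A : ℝ) / q := by
      field_simp at hMr ⊢
      linarith [hMr]
    have hB : (1/q) * ((1 - x) ^ Δ)⁻¹ * Satr ≥ (1/(q:ℝ)) * (Nsat viol A : ℝ) := by
      have h4 : (1/q) * ((1 - x) ^ Δ)⁻¹ * ((1 - x) ^ Δ * (Nsat viol A : ℝ))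
          = (1/(q:ℝ)) * (Nsat viol A : ℝ) := by
        field_simp
      have h5 : (0:ℝ) ≤ (1/q) * ((1 - x) ^ Δ)⁻¹ := by positivity
      nlinarith [hpeelA]
    calc ((Finset.univ.filter fun σ : Fin n → Fin q =>
          (∀ j, ¬ viol j σ) ∧ σ v = a).card : ℝ)
        ≤ (M:ℝ) := hstep1r
      _ = (Nsat viol A : ℝ) / q := hMle
      _ = (1/(q:ℝ)) * (Nsat viol A : ℝ) := by ring
      _ ≤ (1/q) * ((1 - x) ^ Δ)⁻¹ * Satr := hB
  -- sum over fibers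
  have hsum : (Finset.univ.filter fun σ : Fin n → Fin q => ∀ j, ¬ viol j σ).card
      = ∑ a : Fin q, (Finset.univ.filter fun σ : Fin n → Fin q =>
          (∀ j, ¬ viol j σ) ∧ σ v = a).card := by
    rw [Finset.card_eq_sum_card_fiberwise
      (f := fun σ : Fin n → Fin q => σ v) (t := Finset.univ)
      (fun σ _ => Finset.mem_univ _)]
    apply Finset.sum_congr rfl
    intro a _
    rw [Finset.filter_filter]
  -- final computation
  set d : Fin q → ℝ := fun a =>
    ((Finset.univ.filter fun σ : Fin n → Fin q =>
        (∀ j, ¬ viol j σ) ∧ σ v = a).card : ℝ) / Satr - 1 / q with hd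
  have hdsum : ∑ a : Fin q, d a = 0 := by
    rw [hd]
    rw [Finset.sum_sub_distrib]
    rw [← Finset.sum_div]
    have h1 : ∑ a : Fin q, ((Finset.univ.filter fun σ : Fin n → Fin q =>
        (∀ j, ¬ viol j σ) ∧ σ v = a).card : ℝ) = Satr := by
      rw [hSatr]
      exact_mod_cast hsum.symm
    rw [h1, div_self (ne_of_gt hSatpos)]
    rw [Finset.sum_const, Finset.card_univ, Fintype.card_fin]
    field_simp
    simp [nsmul_eq_mul, hq0.ne']
  have hdb : ∀ a : Fin q, d a ≤ (1/q) * (((1 - x) ^ Δ)⁻¹ - 1) := by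
    intro a
    rw [hd]
    have := hmarg a
    have h1 : ((Finset.univ.filter fun σ : Fin n → Fin q =>
        (∀ j, ¬ viol j σ) ∧ σ v = a).card : ℝ) / Satr
        ≤ (1/q) * ((1 - x) ^ Δ)⁻¹ := by
      rw [div_le_iff₀ hSatpos]
      exact this
    have h2 : (1/(q:ℝ)) * (((1 - x) ^ Δ)⁻¹ - 1) = (1/q) * ((1 - x) ^ Δ)⁻¹ - 1/q := by
      ring
    rw [h2]
    linarith
  have hRHS0 : (0:ℝ) ≤ (1/q) * (((1 - x) ^ Δ)⁻¹ - 1) := by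
    have hinv : (1:ℝ) ≤ ((1 - x) ^ Δ)⁻¹ := (one_le_inv₀ hpowpos).mpr hpowle1
    have h0q : (0:ℝ) ≤ 1/(q:ℝ) := by positivity
    exact mul_nonneg h0q (by linarith)
  have habs : ∀ r : ℝ, |r| = 2 * max r 0 - r := by
    intro r
    rcases le_total r 0 with h | h
    · rw [abs_of_nonpos h, max_eq_right h]; ring
    · rw [abs_of_nonneg h, max_eq_left h]; ring
  calc (1 / 2) * ∑ a : Fin q,
        |((Finset.univ.filter fun σ : Fin n → Fin q =>
            (∀ j, ¬ viol j σ) ∧ σ v = a).card : ℝ) / Satr - 1 / q|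
      = (1/2) * ∑ a : Fin q, (2 * max (d a) 0 - d a) := by
        congr 1
        apply Finset.sum_congr rfl
        intro a _
        rw [← habs]
    _ = ∑ a : Fin q, max (d a) 0 - (1/2) * ∑ a : Fin q, d a := by
        rw [Finset.sum_sub_distrib, ← Finset.mul_sum]
        ring
    _ = ∑ a : Fin q, max (d a) 0 := by rw [hdsum]; ring
    _ ≤ ∑ a : Fin q, (1/q) * (((1 - x) ^ Δ)⁻¹ - 1) := by
        apply Finset.sum_le_sum
        intro a _
        exact max_le (hdb a) hRHS0
    _ = ((1 - x) ^ Δ)⁻¹ - 1 := by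
        rw [Finset.sum_const, Finset.card_univ, Fintype.card_fin, nsmul_eq_mul,
          ← mul_assoc, mul_one_div, div_self (ne_of_gt hq0), one_mul]
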